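/- Let A and B be contractions on H such that A and B* are essentially isometric, and assume that ‖Aⁿx‖ → 0 and ‖B*ⁿx‖ → 0 as n → ∞ for every x ∈ H. Then for every T ∈ B(H), the limit lim_{n→∞} ‖AⁿTBⁿ‖ exists and equals ‖T + K(H)‖, the distance in operator norm from T to the ideal of compact operators. -/

import Mathlib

open ContinuousLinearMap Filter Topology

section Aux

variable {H : Type*} [NormedAddCommGroup H] [NormedSpace ℂ H]

lemma compact_mul_left {X Y : H →L[ℂ] H} (h : IsCompactOperator ⇑Y) :
    IsCompactOperator ⇑(X * Y) := by
  rw [ContinuousLinearMap.mul_def, ContinuousLinearMap.coe_comp']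
  exact h.clm_comp X

lemma compact_mul_right {X Y : H →L[ℂ] H} (h : IsCompactOperator ⇑Y) :
    IsCompactOperator ⇑(Y * X) := by
  rw [ContinuousLinearMap.mul_def, ContinuousLinearMap.coe_comp']
  exact h.comp_clm X

lemma compact_add {X Y : H →L[ℂ] H} (hX : IsCompactOperator ⇑X) (hY : IsCompactOperator ⇑Y) :
    IsCompactOperator ⇑(X + Y) := by
  rw [ContinuousLinearMap.coe_add']
  exact hX.add hY

lemma compact_sub {X Y : H →L[ℂ] H} (hX : IsCompactOperator ⇑X) (hY : IsCompactOperator ⇑Y) :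
    IsCompactOperator ⇑(X - Y) := by
  rw [ContinuousLinearMap.coe_sub']
  exact hX.sub hY

lemma compact_neg {X : H →L[ℂ] H} (hX : IsCompactOperator ⇑X) :
    IsCompactOperator ⇑(-X) := by
  rw [ContinuousLinearMap.coe_neg']
  exact hX.neg

lemma pow_norm_le_one {X : H →L[ℂ] H} (hX : ‖X‖ ≤ 1) : ∀ n : ℕ, ‖X ^ n‖ ≤ 1 := by
  intro n
  induction n with
  | zero => rw [pow_zero]; exact ContinuousLinearMap.norm_id_le
  | succ n ih =>
    rw [pow_succ]
    calc ‖X ^ n * X‖ ≤ ‖X ^ n‖ * ‖X‖ := norm_mul_le _ _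
    _ ≤ 1 * 1 := mul_le_mul ih hX (norm_nonneg _) zero_le_one
    _ = 1 := by ring

/-- If `K` is compact and `Aₙ` are contractions tending to `0` strongly, then `‖Aₙ ∘ K‖ → 0`. -/
lemma aux_comp_tendsto (K : H →L[ℂ] H) (hK : IsCompactOperator ⇑K)
    (A : ℕ → H →L[ℂ] H) (hA : ∀ n, ‖A n‖ ≤ 1)
    (h : ∀ x, Tendsto (fun n => ‖(A n) x‖) atTop (𝓝 0)) :
    Tendsto (fun n => ‖(A n) * K‖) atTop (𝓝 0) := by
  obtain ⟨M, hMc, hMs⟩ := hK.image_closedBall_subset_compact 1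
  rw [Metric.tendsto_atTop]
  intro ε hε
  obtain ⟨t, htf, hts⟩ := Metric.totallyBounded_iff.1 hMc.totallyBounded (ε / 4)
    (by linarith)
  have hev : ∀ᶠ n in atTop, ∀ y ∈ t, ‖(A n) y‖ < ε / 4 := by
    rw [eventually_all_finite htf]
    intro y _
    exact (h y).eventually (gt_mem_nhds (by linarith))
  obtain ⟨N, hN⟩ := eventually_atTop.1 hev
  refine ⟨N, fun n hn => ?_⟩
  have key : ‖(A n) * K‖ ≤ ε / 2 := by
    refine opNorm_le_bound _ (by linarith) fun x => ?_
    rcases eq_or_ne x 0 with rfl | hx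
    · simp
    · have hxn : (0 : ℝ) < ‖x‖ := norm_pos_iff.2 hx
      set u : H := ‖x‖⁻¹ • x with hu
      have hun : ‖u‖ = 1 := by
        rw [hu, norm_smul, norm_inv, norm_norm, inv_mul_cancel₀ hxn.ne']
      have hKu : K u ∈ M := hMs ⟨u, by simp [Metric.mem_closedBall, hun], rfl⟩
      obtain ⟨y, hy, hyd⟩ := Set.mem_iUnion₂.1 (hts hKu)
      have h1 : ‖(A n) (K u - y)‖ ≤ ‖K u - y‖ := by
        calc ‖(A n) (K u - y)‖ ≤ ‖A n‖ * ‖K u - y‖ := le_opNorm _ _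
        _ ≤ 1 * ‖K u - y‖ := by
            exact mul_le_mul_of_nonneg_right (hA n) (norm_nonneg _)
        _ = ‖K u - y‖ := one_mul _
      have h2 : ‖K u - y‖ < ε / 4 := by
        rw [← dist_eq_norm]
        exact Metric.mem_ball.1 hyd
      have h3 : ‖(A n) (K u)‖ < ε / 2 := by
        calc ‖(A n) (K u)‖ = ‖(A n) (K u - y) + (A n) y‖ := by rw [map_sub, sub_add_cancel]
        _ ≤ ‖(A n) (K u - y)‖ + ‖(A n) y‖ := norm_add_le _ _
        _ < ε / 4 + ε / 4 := by
            have := hN n hn y hy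
            linarith [h1.trans_lt h2]
        _ = ε / 2 := by ring
      have hxu : ((A n) * K) x = ‖x‖ • ((A n) * K) u := by
        rw [hu, map_smul_of_tower, smul_smul, mul_inv_cancel₀ hxn.ne', one_smul]
      have hmm : ‖((A n) * K) u‖ = ‖(A n) (K u)‖ := by
        rw [ContinuousLinearMap.mul_apply]
      rw [hxu, norm_smul, norm_norm, mul_comm, hmm]
      exact mul_le_mul_of_nonneg_right h3.le hxn.le
  rw [Real.dist_eq, sub_zero, abs_of_nonneg (norm_nonneg _)]
  linarith

end Aux

set_option maxHeartbeats 1000000 in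
/-- **Theorem 2.7.** Let `A` and `B*` be essentially isometric contractions on `H` with
`‖Aⁿx‖ → 0` and `‖B*ⁿx‖ → 0` for all `x ∈ H`. Then for every `T ∈ B(H)`,
`lim ‖AⁿTBⁿ‖ = ‖T + K(H)‖ = inf {‖T + K‖ : K compact}`. -/
theorem stmt_6 {H : Type*} [NormedAddCommGroup H] [InnerProductSpace ℂ H]
    [CompleteSpace H] [TopologicalSpace.SeparableSpace H]
    (hinf : ¬ FiniteDimensional ℂ H)
    (A B T : H →L[ℂ] H)
    (hAc : ‖A‖ ≤ 1) (hBc : ‖B‖ ≤ 1)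
    (hA : IsCompactOperator (⇑((1 : H →L[ℂ] H) - adjoint A * A)))
    (hB : IsCompactOperator (⇑((1 : H →L[ℂ] H) - B * adjoint B)))
    (hAn : ∀ x : H, Tendsto (fun n : ℕ => ‖(A ^ n) x‖) atTop (𝓝 0))
    (hBn : ∀ x : H, Tendsto (fun n : ℕ => ‖((adjoint B) ^ n) x‖) atTop (𝓝 0)) :
    Tendsto (fun n : ℕ => ‖A ^ n * T * B ^ n‖) atTop
      (𝓝 (sInf {r : ℝ | ∃ K : H →L[ℂ] H, IsCompactOperator ⇑K ∧ r = ‖T + K‖})) := by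
  set S : Set ℝ := {r : ℝ | ∃ K : H →L[ℂ] H, IsCompactOperator ⇑K ∧ r = ‖T + K‖} with hSdef
  have hSne : S.Nonempty := ⟨‖T + 0‖, 0, isCompactOperator_zero, rfl⟩
  have hSbd : BddBelow S := by
    refine ⟨0, fun r hr => ?_⟩
    obtain ⟨K, _, rfl⟩ := hr
    exact norm_nonneg _
  have hAadj : ‖adjoint A‖ ≤ 1 := by
    rwa [LinearIsometryEquiv.norm_map ContinuousLinearMap.adjoint A]
  have hBadj : ‖adjoint B‖ ≤ 1 := by
    rwa [LinearIsometryEquiv.norm_map ContinuousLinearMap.adjoint B]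
  -- powers identities
  have powA : ∀ n : ℕ, ∃ C : H →L[ℂ] H, IsCompactOperator ⇑C ∧
      (adjoint A) ^ n * A ^ n = 1 - C := by
    intro n
    induction n with
    | zero => exact ⟨0, isCompactOperator_zero, by simp⟩
    | succ n ih =>
      obtain ⟨C, hC, hCe⟩ := ih
      refine ⟨(1 - adjoint A * A) + adjoint A * (C * A), ?_, ?_⟩
      · exact compact_add hA (compact_mul_left (compact_mul_right hC))
      · calc (adjoint A) ^ (n + 1) * A ^ (n + 1)
            = adjoint A * ((adjoint A) ^ n * A ^ n) * A := by
              rw [pow_succ' (adjoint A), pow_succ A]; noncomm_ring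
          _ = adjoint A * (1 - C) * A := by rw [hCe]
          _ = 1 - ((1 - adjoint A * A) + adjoint A * (C * A)) := by noncomm_ring
  have powB : ∀ n : ℕ, ∃ D : H →L[ℂ] H, IsCompactOperator ⇑D ∧
      B ^ n * (adjoint B) ^ n = 1 - D := by
    intro n
    induction n with
    | zero => exact ⟨0, isCompactOperator_zero, by simp⟩
    | succ n ih =>
      obtain ⟨D, hD, hDe⟩ := ih
      refine ⟨(1 - B * adjoint B) + B * (D * adjoint B), ?_, ?_⟩
      · exact compact_add hB (compact_mul_left (compact_mul_right hD))
      · calc B ^ (n + 1) * (adjoint B) ^ (n + 1)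
            = B * (B ^ n * (adjoint B) ^ n) * adjoint B := by
              rw [pow_succ' B, pow_succ (adjoint B)]; noncomm_ring
          _ = B * (1 - D) * adjoint B := by rw [hDe]
          _ = 1 - ((1 - B * adjoint B) + B * (D * adjoint B)) := by noncomm_ring
  -- lower bound: sInf S ≤ ‖AⁿTBⁿ‖ for all n
  have hlow : ∀ n : ℕ, sInf S ≤ ‖A ^ n * T * B ^ n‖ := by
    intro n
    obtain ⟨C, hC, hCe⟩ := powA n
    obtain ⟨D, hD, hDe⟩ := powB n
    set K : H →L[ℂ] H := -(C * T) - T * D + C * (T * D) with hKdef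
    have hKc : IsCompactOperator ⇑K :=
      compact_add (compact_sub (compact_neg (compact_mul_right hC))
        (compact_mul_left hD)) (compact_mul_left (compact_mul_left hD))
    have key : (adjoint A) ^ n * (A ^ n * T * B ^ n) * (adjoint B) ^ n = T + K := by
      have h1 : (adjoint A) ^ n * (A ^ n * T * B ^ n) * (adjoint B) ^ n
          = ((adjoint A) ^ n * A ^ n) * T * (B ^ n * (adjoint B) ^ n) := by noncomm_ring
      rw [h1, hCe, hDe, hKdef]
      noncomm_ring
    have hTK : ‖T + K‖ ≤ ‖A ^ n * T * B ^ n‖ := by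
      rw [← key]
      calc ‖(adjoint A) ^ n * (A ^ n * T * B ^ n) * (adjoint B) ^ n‖
          ≤ ‖(adjoint A) ^ n * (A ^ n * T * B ^ n)‖ * ‖(adjoint B) ^ n‖ := norm_mul_le _ _
        _ ≤ ‖(adjoint A) ^ n‖ * ‖A ^ n * T * B ^ n‖ * ‖(adjoint B) ^ n‖ := by
            exact mul_le_mul_of_nonneg_right (norm_mul_le _ _) (norm_nonneg _)
        _ ≤ 1 * ‖A ^ n * T * B ^ n‖ * 1 := by
            gcongr
            · exact pow_norm_le_one hAadj n
            · exact pow_norm_le_one hBadj n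
        _ = ‖A ^ n * T * B ^ n‖ := by ring
    exact le_trans (csInf_le hSbd ⟨K, hKc, rfl⟩) hTK
  -- main convergence
  rw [Metric.tendsto_atTop]
  intro ε hε
  obtain ⟨r, hrS, hrlt⟩ := exists_lt_of_csInf_lt hSne
    (lt_add_of_pos_right (sInf S) (by linarith : (0 : ℝ) < ε / 2))
  obtain ⟨K, hKc, rfl⟩ := hrS
  have htend : Tendsto (fun n : ℕ => ‖A ^ n * K‖) atTop (𝓝 0) :=
    aux_comp_tendsto K hKc (fun n => A ^ n) (pow_norm_le_one hAc) hAn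
  have hev : ∀ᶠ n in atTop, ‖A ^ n * K‖ < ε / 2 := by
    have := Metric.tendsto_atTop.1 htend (ε / 2) (by linarith)
    obtain ⟨N, hN⟩ := this
    refine eventually_atTop.2 ⟨N, fun n hn => ?_⟩
    have := hN n hn
    rwa [Real.dist_eq, sub_zero, abs_of_nonneg (norm_nonneg _)] at this
  obtain ⟨N, hN⟩ := eventually_atTop.1 hev
  refine ⟨N, fun n hn => ?_⟩
  have hup : ‖A ^ n * T * B ^ n‖ < sInf S + ε := by
    have hsplit : A ^ n * T * B ^ n = A ^ n * (T + K) * B ^ n - (A ^ n * K) * B ^ n := by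
      noncomm_ring
    calc ‖A ^ n * T * B ^ n‖
        = ‖A ^ n * (T + K) * B ^ n - (A ^ n * K) * B ^ n‖ := by rw [← hsplit]
      _ ≤ ‖A ^ n * (T + K) * B ^ n‖ + ‖(A ^ n * K) * B ^ n‖ := norm_sub_le _ _
      _ ≤ ‖T + K‖ + ‖A ^ n * K‖ := by
          have h1 : ‖A ^ n * (T + K) * B ^ n‖ ≤ ‖T + K‖ := by
            calc ‖A ^ n * (T + K) * B ^ n‖
                ≤ ‖A ^ n * (T + K)‖ * ‖B ^ n‖ := norm_mul_le _ _
              _ ≤ ‖A ^ n‖ * ‖T + K‖ * ‖B ^ n‖ := by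
                  exact mul_le_mul_of_nonneg_right (norm_mul_le _ _) (norm_nonneg _)
              _ ≤ 1 * ‖T + K‖ * 1 := by
                  gcongr
                  · exact pow_norm_le_one hAc n
                  · exact pow_norm_le_one hBc n
              _ = ‖T + K‖ := by ring
          have h2 : ‖(A ^ n * K) * B ^ n‖ ≤ ‖A ^ n * K‖ := by
            calc ‖(A ^ n * K) * B ^ n‖ ≤ ‖A ^ n * K‖ * ‖B ^ n‖ := norm_mul_le _ _
              _ ≤ ‖A ^ n * K‖ * 1 := by
                  exact mul_le_mul_of_nonneg_left (pow_norm_le_one hBc n) (norm_nonneg _)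
              _ = ‖A ^ n * K‖ := by ring
          linarith
      _ < (sInf S + ε / 2) + ε / 2 := by
          have := hN n hn
          linarith
      _ = sInf S + ε := by ring
  rw [Real.dist_eq, abs_of_nonneg (by linarith [hlow n] : (0 : ℝ) ≤ ‖A ^ n * T * B ^ n‖ - sInf S)]
  linarith [hlow n]
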